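/- Let A ∈ ℂ^{2^n × 2^n} be a band matrix with bandwidth k ≥ 1, i.e. A_{ij} = 0 whenever |i − j| > k. Then the number of distinct values of b ⊕ c over pairs (b,c) with A_{bc} ≠ 0 is at most (n − r)·k + 2^r, where r = ⌈log₂ k⌉. -/

import Mathlib

private lemma xor_key : ∀ h b c : ℕ, c ≤ b → 2^h ≤ b ^^^ c → b ^^^ c < 2^(h+1) →
    2^(h+1) ≤ (b ^^^ c) + (b - c) := by
  intro h
  induction h with
  | zero =>
    intro b c hcb h1 h2
    have hne : b ≠ c := by
      rw [ne_eq, ← xor_eq_zero_iff]; omega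
    omega
  | succ h ih =>
    intro b c hcb h1 h2
    have hd : (b ^^^ c) / 2 = b/2 ^^^ c/2 := Nat.xor_div_two
    have hm : (b ^^^ c) % 2 = (b + c) % 2 := Nat.xor_mod_two_eq
    have hcb' : c/2 ≤ b/2 := Nat.div_le_div_right hcb
    have hp1 : (2:ℕ)^(h+1) = 2 * 2^h := by ring
    have hp2 : (2:ℕ)^(h+1+1) = 2 * 2^(h+1) := by ring
    have h1' : 2^h ≤ b/2 ^^^ c/2 := by rw [← hd]; omega
    have h2' : b/2 ^^^ c/2 < 2^(h+1) := by rw [← hd]; omega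
    have hih := ih (b/2) (c/2) hcb' h1' h2'
    omega

theorem band_matrix_xor_classes {n k : ℕ} (hk : 1 ≤ k)
    (A : Matrix (Fin (2^n)) (Fin (2^n)) ℂ)
    (hband : ∀ i j : Fin (2^n), (k : ℤ) < |(i : ℤ) - (j : ℤ)| → A i j = 0) :
    (Finset.image (fun p : Fin (2^n) × Fin (2^n) => (p.1 : ℕ) ^^^ (p.2 : ℕ))
        (Finset.univ.filter fun p => A p.1 p.2 ≠ 0)).card
      ≤ (n - Nat.clog 2 k) * k + 2 ^ (Nat.clog 2 k) := by
  set r := Nat.clog 2 k with hr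
  have hkr : k ≤ 2^r := Nat.le_pow_clog one_lt_two k
  set S : Finset ℕ := Finset.range (2^r) ∪
    (Finset.Ico r n).biUnion (fun h => Finset.Ico (2^(h+1) - k) (2^(h+1))) with hS
  have hsub : (Finset.image (fun p : Fin (2^n) × Fin (2^n) => (p.1 : ℕ) ^^^ (p.2 : ℕ))
      (Finset.univ.filter fun p => A p.1 p.2 ≠ 0)) ⊆ S := by
    intro x hx
    simp only [Finset.mem_image, Finset.mem_filter, Finset.mem_univ, true_and] at hx
    obtain ⟨p, hp, rfl⟩ := hx
    set b := (p.1 : ℕ) with hb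
    set c := (p.2 : ℕ) with hc
    have hbn : b < 2^n := p.1.isLt
    have hcn : c < 2^n := p.2.isLt
    have hbc : b - c ≤ k ∧ c - b ≤ k := by
      by_contra hcon
      apply hp
      apply hband
      rw [lt_abs]
      omega
    set x := b ^^^ c with hxdef
    by_cases hxr : x < 2^r
    · exact Finset.mem_union_left _ (Finset.mem_range.mpr hxr)
    · push_neg at hxr
      have hxne : x ≠ 0 := by
        have : (0:ℕ) < 2^r := Nat.pow_pos (by norm_num)
        omega
      set h := Nat.log 2 x with hh
      have hx1 : 2^h ≤ x := Nat.pow_log_le_self 2 hxne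
      have hx2 : x < 2^(h+1) := Nat.lt_pow_succ_log_self one_lt_two x
      have hrh : r ≤ h := (Nat.le_log_iff_pow_le one_lt_two hxne).mpr hxr
      have hxn : x < 2^n := Nat.xor_lt_two_pow hbn hcn
      have hhn : h < n := by
        by_contra hcon
        push_neg at hcon
        have : (2:ℕ)^n ≤ 2^h := Nat.pow_le_pow_right (by norm_num) hcon
        omega
      have hkey : 2^(h+1) ≤ x + k := by
        rcases le_total c b with hle | hle
        · have := xor_key h b c hle hx1 hx2
          omega
        · have hxc : x = c ^^^ b := Nat.xor_comm b c
          have := xor_key h c b hle (by omega) (by omega)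
          omega
      apply Finset.mem_union_right
      rw [Finset.mem_biUnion]
      exact ⟨h, Finset.mem_Ico.mpr ⟨hrh, hhn⟩, Finset.mem_Ico.mpr ⟨by omega, hx2⟩⟩
  calc _ ≤ S.card := Finset.card_le_card hsub
    _ ≤ (Finset.range (2^r)).card +
        ((Finset.Ico r n).biUnion (fun h => Finset.Ico (2^(h+1) - k) (2^(h+1)))).card :=
          Finset.card_union_le _ _
    _ ≤ 2^r + (n - r) * k := by
        have h1 : ((Finset.Ico r n).biUnion
            (fun h => Finset.Ico (2^(h+1) - k) (2^(h+1)))).card ≤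
            ∑ h ∈ Finset.Ico r n, (Finset.Ico (2^(h+1) - k) (2^(h+1))).card :=
          Finset.card_biUnion_le
        have h2 : ∑ h ∈ Finset.Ico r n, (Finset.Ico (2^(h+1) - k) (2^(h+1))).card ≤
            ∑ _h ∈ Finset.Ico r n, k := by
          apply Finset.sum_le_sum
          intro i _
          rw [Nat.card_Ico]
          omega
        simp only [Finset.sum_const, Nat.card_Ico, smul_eq_mul, Finset.card_range] at *
        omega
    _ = (n - r) * k + 2^r := by ring
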